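/- Let t, n be integers with t > 1 and let G be a connected graph on n vertices with clique number exactly t that is not isomorphic to the Turán graph T_{n,t}. Then G ≺_s T_{n,t}, i.e., G strictly precedes T_{n,t} in the lexicographic spectral-moment order. In particular, S_0(G) = S_0(T_{n,t}), S_1(G) = S_1(T_{n,t}), and S_2(G) < S_2(T_{n,t}). -/

import Mathlib

open SimpleGraph

/-- The `k`-th spectral moment of a graph: the trace of the `k`-th power of its
adjacency matrix (over `ℝ`). -/
noncomputable def spectralMoment {V : Type*} [Fintype V] [DecidableEq V]
    (G : SimpleGraph V) (k : ℕ) : ℝ :=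
  letI : DecidableRel G.Adj := Classical.decRel _
  Matrix.trace ((G.adjMatrix ℝ) ^ k)

/-- `G₁ ≺ₛ G₂` : the spectral moment sequence `(S_0, …, S_{n-1})` of `G₁` is
lexicographically strictly smaller than that of `G₂` (both graphs have `n` vertices). -/
noncomputable def SPrec {α β : Type*} [Fintype α] [DecidableEq α] [Fintype β] [DecidableEq β]
    (G₁ : SimpleGraph α) (G₂ : SimpleGraph β) : Prop :=
  ∃ k, 1 ≤ k ∧ k ≤ Fintype.card α - 1 ∧
    (∀ i < k, spectralMoment G₁ i = spectralMoment G₂ i) ∧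
    spectralMoment G₁ k < spectralMoment G₂ k

lemma spectralMoment_zero {V : Type*} [Fintype V] [DecidableEq V] (G : SimpleGraph V) :
    spectralMoment G 0 = Fintype.card V := by
  simp [spectralMoment]

lemma spectralMoment_one {V : Type*} [Fintype V] [DecidableEq V] (G : SimpleGraph V) :
    spectralMoment G 1 = 0 := by
  simp [spectralMoment]

lemma spectralMoment_two {V : Type*} [Fintype V] [DecidableEq V] (G : SimpleGraph V)
    [inst : DecidableRel G.Adj] [Fintype G.edgeSet] :
    spectralMoment G 2 = 2 * G.edgeFinset.card := by
  unfold spectralMoment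
  rw [Subsingleton.elim (Classical.decRel G.Adj) inst]
  rw [pow_two, Matrix.trace]
  simp only [Matrix.diag_apply, adjMatrix_mul_self_apply_self]
  rw [← Nat.cast_sum]
  norm_cast
  rw [sum_degrees_eq_twice_card_edges]; congr!

/-- Every connected `n`-vertex graph with clique number `t` other than the Turán graph
strictly precedes the Turán graph `T_{n,t}` in the spectral-moment order. -/
theorem sPrec_turanGraph (n t : ℕ) (ht : 1 < t) (G : SimpleGraph (Fin n))
    (hconn : G.Connected) (hclique : G.cliqueNum = t)
    (hiso : ¬ Nonempty (G ≃g turanGraph n t)) :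
    SPrec G (turanGraph n t) ∧
      spectralMoment G 0 = spectralMoment (turanGraph n t) 0 ∧
      spectralMoment G 1 = spectralMoment (turanGraph n t) 1 ∧
      spectralMoment G 2 < spectralMoment (turanGraph n t) 2 := by
  classical
  have ht' : 0 < t := by omega
  -- G is K_{t+1}-free
  have hfree : G.CliqueFree (t + 1) := by
    intro s hs
    have h1 : s.card ≤ G.cliqueNum := IsClique.card_le_cliqueNum (G := G) (tc := hs.isClique)
    rw [hs.card_eq, hclique] at h1
    omega
  -- t ≤ n
  obtain ⟨s, hs⟩ := G.exists_isNClique_cliqueNum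
  have htn : t ≤ n := by
    have := Finset.card_le_univ s
    rw [hs.card_eq, hclique, Fintype.card_fin] at this
    exact this
  -- n ≥ 3
  have hn3 : 3 ≤ n := by
    by_contra h
    have hn2 : n = 2 := by omega
    have ht2 : t = 2 := by omega
    have hG : G = turanGraph n t := by
      have htop : turanGraph n t = ⊤ := by
        rw [turanGraph_eq_top]; omega
      have hsuniv : s = Finset.univ := by
        apply Finset.eq_univ_of_card
        rw [hs.card_eq, hclique, Fintype.card_fin, hn2, ht2]
      rw [htop]
      ext a b
      simp only [top_adj]
      constructor
      · exact G.ne_of_adj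
      · intro hab
        exact hs.isClique (by simp [hsuniv]) (by simp [hsuniv]) hab
    exact hiso ⟨hG ▸ Iso.refl⟩
  -- edge count comparison
  have htm := isTuranMaximal_turanGraph (n := n) ht'
  have hle : G.edgeFinset.card ≤ (turanGraph n t).edgeFinset.card := htm.2 hfree
  have hlt : G.edgeFinset.card < (turanGraph n t).edgeFinset.card := by
    rcases lt_or_eq_of_le hle with h | h
    · exact h
    · exfalso
      have hGtm : G.IsTuranMaximal t :=
        ⟨hfree, @fun H _ hH => (htm.2 hH).trans_eq h.symm⟩
      have := (isTuranMaximal_iff_nonempty_iso_turanGraph ht').mp hGtm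
      rw [Fintype.card_fin] at this
      exact hiso this
  have h2 : spectralMoment G 2 < spectralMoment (turanGraph n t) 2 := by
    rw [spectralMoment_two G, spectralMoment_two (turanGraph n t)]
    have : (G.edgeFinset.card : ℝ) < ((turanGraph n t).edgeFinset.card : ℝ) := by
      exact_mod_cast hlt
    linarith
  have h0 : spectralMoment G 0 = spectralMoment (turanGraph n t) 0 := by
    rw [spectralMoment_zero, spectralMoment_zero]
  have h1 : spectralMoment G 1 = spectralMoment (turanGraph n t) 1 := by
    rw [spectralMoment_one, spectralMoment_one]
  refine ⟨⟨2, by norm_num, ?_, ?_, h2⟩, h0, h1, h2⟩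
  · rw [Fintype.card_fin]; omega
  · intro i hi
    interval_cases i
    · exact h0
    · exact h1
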